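/- Let α > −1 be real, N ≥ 1, and let x_1, …, x_N be pairwise distinct positive reals. Then, as y = (y_1,…,y_N) tends to (0,…,0) through tuples of pairwise distinct positive reals, the ratio det_{1≤i,j≤N}[ I_α(x_i · y_j) ] / ( (∏_{k=1}^N (x_k y_k)^α) · Δ(y²) ) converges to Δ(x²) · 2^{−αN − N(N−1)} / ∏_{j=1}^N ( (j−1)! · Γ(α+j) ). -/

import Mathlib

open Filter

/-- The modified Bessel function of the first kind, for `x > 0`,
`I_α(x) = Σ_{k=0}^∞ (x/2)^{2k+α} / (k! Γ(k+α+1))`. -/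
noncomputable def besselI (α x : ℝ) : ℝ :=
  ∑' k : ℕ, (x / 2) ^ (2 * (k : ℝ) + α) / ((Nat.factorial k : ℝ) * Real.Gamma ((k : ℝ) + α + 1))

/-- The Vandermonde product `Δ(x) = ∏_{1 ≤ j < k ≤ N} (x_k - x_j)`. -/
def vandermondeProd {N : ℕ} (x : Fin N → ℝ) : ℝ :=
  ∏ p ∈ Finset.univ.filter (fun p : Fin N × Fin N => p.1 < p.2), (x p.2 - x p.1)

namespace S4
def hpoly : ℕ → ℕ → (ℕ → ℝ) → ℝ
  | 0, _, _ => 1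
  | n+1, 0, b => b 0 * hpoly n 0 b
  | n+1, j+1, b => hpoly (n+1) j b + b (j+1) * hpoly n (j+1) b

lemma hpoly_continuous : ∀ (n j : ℕ), Continuous (fun b : ℕ → ℝ => hpoly n j b)
  | 0, _ => by simpa [hpoly] using continuous_const
  | n+1, 0 => by
      simp only [hpoly]
      exact (continuous_apply 0).mul (hpoly_continuous n 0)
  | n+1, j+1 => by
      simp only [hpoly]
      exact (hpoly_continuous (n+1) j).add
        ((continuous_apply (j+1)).mul (hpoly_continuous n (j+1)))

lemma hpoly_zero : ∀ (n j : ℕ), 0 < n → hpoly n j (0 : ℕ → ℝ) = 0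
  | n+1, 0, _ => by simp [hpoly]
  | n+1, j+1, _ => by simp [hpoly, hpoly_zero (n+1) j (Nat.succ_pos n)]

lemma hpoly_bound : ∀ (n j : ℕ) (b : ℕ → ℝ) (r : ℝ), (∀ l, l ≤ j → |b l| ≤ r) →
    |hpoly n j b| ≤ (n+j).choose j * r ^ n
  | 0, j, b, r, hb => by simp [hpoly]
  | n+1, 0, b, r, hb => by
      have hr : 0 ≤ r := le_trans (abs_nonneg _) (hb 0 (Nat.zero_le _))
      have h1 := hpoly_bound n 0 b r hb
      simp only [hpoly]
      calc |b 0 * hpoly n 0 b| = |b 0| * |hpoly n 0 b| := abs_mul _ _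
        _ ≤ r * ((n+0).choose 0 * r ^ n) :=
          mul_le_mul (hb 0 le_rfl) h1 (abs_nonneg _) hr
        _ = (n+1+0).choose 0 * r ^ (n+1) := by simp [Nat.choose]; ring
  | n+1, j+1, b, r, hb => by
      have hr : 0 ≤ r := le_trans (abs_nonneg _) (hb 0 (Nat.zero_le _))
      have h1 : |hpoly (n+1) j b| ≤ (n+1+j).choose j * r ^ (n+1) :=
        hpoly_bound (n+1) j b r (fun l hl => hb l (by omega))
      have h2 : |hpoly n (j+1) b| ≤ (n+(j+1)).choose (j+1) * r ^ n :=
        hpoly_bound n (j+1) b r hb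
      have pascal : (n+1+(j+1)).choose (j+1)
          = (n+1+j).choose j + (n+(j+1)).choose (j+1) := by
        have e1 : n+1+(j+1) = (n+j+1)+1 := by omega
        have e2 : n+1+j = n+j+1 := by omega
        have e3 : n+(j+1) = n+j+1 := by omega
        rw [e1, e2, e3, Nat.choose_succ_succ]
      simp only [hpoly]
      calc |hpoly (n+1) j b + b (j+1) * hpoly n (j+1) b|
          ≤ |hpoly (n+1) j b| + |b (j+1) * hpoly n (j+1) b| := abs_add_le _ _
        _ ≤ (n+1+j).choose j * r ^ (n+1) + r * ((n+(j+1)).choose (j+1) * r ^ n) := by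
            refine add_le_add h1 ?_
            rw [abs_mul]
            exact mul_le_mul (hb (j+1) le_rfl) h2 (abs_nonneg _) hr
        _ = ((n+1+j).choose j + (n+(j+1)).choose (j+1) : ℕ) * r ^ (n+1) := by
            push_cast; ring
        _ = (n+1+(j+1)).choose (j+1) * r ^ (n+1) := by rw [pascal]

/-- Newton expansion of `t^k` at nodes `b 0, b 1, ...`. -/
lemma newton (k : ℕ) (t : ℝ) (b : ℕ → ℝ) :
    t ^ k = ∑ j ∈ Finset.range (k+1), hpoly (k-j) j b * ∏ l ∈ Finset.range j, (t - b l) := by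
  induction k with
  | zero => simp [hpoly]
  | succ k ih =>
    have h0 : t ^ (k+1) = t * t ^ k := by ring
    rw [h0, ih, Finset.mul_sum]
    have expand : ∀ j, t * (hpoly (k-j) j b * ∏ l ∈ Finset.range j, (t - b l))
        = hpoly (k-j) j b * ∏ l ∈ Finset.range (j+1), (t - b l)
          + b j * hpoly (k-j) j b * ∏ l ∈ Finset.range j, (t - b l) := by
      intro j
      rw [Finset.prod_range_succ]
      ring
    rw [Finset.sum_congr rfl (fun j _ => expand j), Finset.sum_add_distrib]
    -- first sum: reindex j -> j+1
    have reidx : ∑ j ∈ Finset.range (k+1),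
        hpoly (k-j) j b * ∏ l ∈ Finset.range (j+1), (t - b l)
        = ∑ j ∈ Finset.range (k+2), (if 1 ≤ j then
            hpoly (k-(j-1)) (j-1) b * ∏ l ∈ Finset.range j, (t - b l) else 0) := by
      rw [Finset.sum_range_succ' _ (k+1)]
      simp only [Nat.add_sub_cancel, if_pos (Nat.le_add_left 1 _)]
      simp
    rw [reidx]
    -- second sum: extend to range (k+2)
    have ext : ∑ j ∈ Finset.range (k+1),
        b j * hpoly (k-j) j b * ∏ l ∈ Finset.range j, (t - b l)
        = ∑ j ∈ Finset.range (k+2), (if j ≤ k then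
            b j * hpoly (k-j) j b * ∏ l ∈ Finset.range j, (t - b l) else 0) := by
      symm
      rw [Finset.sum_range_succ, if_neg (by omega), add_zero]
      exact Finset.sum_congr rfl fun j hj => by
        rw [Finset.mem_range] at hj; rw [if_pos (by omega)]
    rw [ext, ← Finset.sum_add_distrib]
    apply Finset.sum_congr rfl
    intro j hj
    rw [Finset.mem_range] at hj
    rcases Nat.eq_zero_or_pos j with rfl | hjpos
    · simp [hpoly]
    · obtain ⟨j, rfl⟩ : ∃ j', j = j'+1 := ⟨j-1, by omega⟩
      rw [if_pos (by omega)]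
      simp only [Nat.add_sub_cancel]
      rcases Nat.lt_or_ge j k with hjk | hjk
      · rw [if_pos (by omega)]
        have e1 : k+1-(j+1) = (k-(j+1))+1 := by omega
        have e2 : k-j = (k-(j+1))+1 := by omega
        rw [e1, e2, hpoly]
        ring
      · -- j ≥ k: j = k (since j+1 ≤ k+1)
        have hjk' : j = k := by omega
        subst hjk'
        rw [if_neg (by omega)]
        simp [hpoly]

noncomputable def coefIf (j k : ℕ) (b : ℕ → ℝ) : ℝ :=
  if j ≤ k then hpoly (k-j) j b else 0

lemma coefIf_bound (j k : ℕ) (b : ℕ → ℝ) (hb : ∀ l, |b l| ≤ 1) :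
    |coefIf j k b| ≤ (2:ℝ) ^ k := by
  unfold coefIf
  split
  · next hjk =>
    calc |hpoly (k-j) j b| ≤ ((k-j)+j).choose j * (1:ℝ) ^ (k-j) :=
          hpoly_bound _ _ _ _ (fun l _ => hb l)
      _ = (k.choose j : ℝ) := by rw [Nat.sub_add_cancel hjk]; simp
      _ ≤ (2:ℝ) ^ k := by
          have h1 : k.choose j ≤ 2 ^ k := by
            rw [← Nat.sum_range_choose k]
            rcases Nat.lt_or_ge j (k+1) with h | h
            · exact Finset.single_le_sum (fun i _ => Nat.zero_le _) (Finset.mem_range.2 h)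
            · simp [Nat.choose_eq_zero_of_lt (by omega)]
          calc (k.choose j : ℝ) ≤ ((2^k : ℕ) : ℝ) := by exact_mod_cast h1
            _ = (2:ℝ)^k := by push_cast; ring
  · simp only [abs_zero]
    positivity

lemma coefIf_zero (j k : ℕ) : coefIf j k (0 : ℕ → ℝ) = if k = j then 1 else 0 := by
  unfold coefIf
  rcases Nat.lt_or_ge k j with h | h
  · rw [if_neg (by omega), if_neg (by omega)]
  · rw [if_pos (by omega)]
    rcases Nat.eq_or_lt_of_le h with rfl | h'
    · simp [hpoly]
    · rw [hpoly_zero _ _ (by omega), if_neg (by omega)]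

lemma coefIf_continuous (j k : ℕ) : Continuous (fun b : ℕ → ℝ => coefIf j k b) := by
  unfold coefIf
  split
  · exact hpoly_continuous _ _
  · exact continuous_const

/-- Newton expansion of `(b m)^k` with sum truncated to `range N` for `m < N`. -/
lemma newton_range (N m k : ℕ) (hm : m < N) (b : ℕ → ℝ) :
    b m ^ k = ∑ j ∈ Finset.range N, coefIf j k b * ∏ l ∈ Finset.range j, (b m - b l) := by
  have key := newton k (b m) b
  have hz : ∀ j, m < j → (∏ l ∈ Finset.range j, (b m - b l)) = 0 := fun j hj =>
    Finset.prod_eq_zero (Finset.mem_range.2 hj) (by ring)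
  rw [key]
  set F : ℕ → ℝ := fun j => coefIf j k b * ∏ l ∈ Finset.range j, (b m - b l) with hF
  have hFz : ∀ j, m < j → F j = 0 := fun j hj => by simp [hF, hz j hj]
  have hFz2 : ∀ j, k < j → F j = 0 := fun j hj => by
    simp [hF, coefIf, Nat.not_le.2 hj]
  have e1 : ∀ j, j ∈ Finset.range (k+1) →
      hpoly (k-j) j b * ∏ l ∈ Finset.range j, (b m - b l) = F j := by
    intro j hj
    rw [Finset.mem_range] at hj
    simp [hF, coefIf, Nat.lt_succ_iff.1 hj]
  rw [Finset.sum_congr rfl e1]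
  -- both sides equal sum over range (min (k+1) N)
  rcases Nat.lt_or_ge k N with h | h
  · -- k+1 ≤ N : extend LHS from range (k+1) to range N
    apply Finset.sum_subset (Finset.range_subset_range.2 (by omega))
    intro j _ hj
    rw [Finset.mem_range, Nat.not_lt] at hj
    exact hFz2 j (by omega)
  · -- N ≤ k : truncate LHS from range (k+1) to range N, using m < N ≤ j
    symm
    apply Finset.sum_subset (Finset.range_subset_range.2 (by omega))
    intro j _ hj
    rw [Finset.mem_range, Nat.not_lt] at hj
    exact hFz j (by omega)


section DetFactor
variable {N : ℕ} (c : ℕ → ℝ) (a : Fin N → ℝ) (b : ℕ → ℝ)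

lemma summable_coef (hc : ∀ M : ℝ, 0 ≤ M → Summable fun k => |c k| * M ^ k)
    (hb : ∀ l, |b l| ≤ 1) (i : Fin N) (j : ℕ) :
    Summable fun k => c k * a i ^ k * coefIf j k b := by
  apply Summable.of_norm
  have hg : Summable fun k => |c k| * (2 * |a i|) ^ k := hc _ (by positivity)
  refine Summable.of_nonneg_of_le (fun k => norm_nonneg _) (fun k => ?_) hg
  rw [Real.norm_eq_abs, abs_mul, abs_mul, mul_pow]
  calc |c k| * |a i ^ k| * |coefIf j k b| ≤ |c k| * |a i| ^ k * 2 ^ k := by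
        rw [abs_pow]
        exact mul_le_mul_of_nonneg_left (coefIf_bound j k b hb) (by positivity)
    _ = |c k| * (2 ^ k * |a i| ^ k) := by ring

lemma det_factor (hc : ∀ M : ℝ, 0 ≤ M → Summable fun k => |c k| * M ^ k)
    (hb : ∀ l, |b l| ≤ 1) :
    Matrix.det (Matrix.of fun i m : Fin N => ∑' k, c k * (a i * b m) ^ k)
      = Matrix.det (Matrix.of fun i j : Fin N => ∑' k, c k * a i ^ k * coefIf (j:ℕ) k b)
        * Matrix.det (Matrix.of fun m j : Fin N => ∏ l ∈ Finset.range (j:ℕ), (b m - b l)) := by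
  rw [← Matrix.det_transpose (Matrix.of fun m j : Fin N => ∏ l ∈ Finset.range (j:ℕ), (b m - b l)),
    ← Matrix.det_mul]
  congr 1
  ext i m
  rw [Matrix.mul_apply]
  simp only [Matrix.of_apply, Matrix.transpose_apply]
  symm
  calc ∑ j : Fin N, (∑' k, c k * a i ^ k * coefIf (j:ℕ) k b)
          * ∏ l ∈ Finset.range (j:ℕ), (b m - b l)
      = ∑ j : Fin N, ∑' k, c k * a i ^ k * coefIf (j:ℕ) k b
          * ∏ l ∈ Finset.range (j:ℕ), (b m - b l) := by
        refine Finset.sum_congr rfl fun j _ => ?_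
        rw [tsum_mul_right]
    _ = ∑' k, ∑ j : Fin N, c k * a i ^ k * coefIf (j:ℕ) k b
          * ∏ l ∈ Finset.range (j:ℕ), (b m - b l) := by
        refine (Summable.tsum_finsetSum fun j _ => ?_).symm
        exact (summable_coef c a b hc hb i j).mul_right _
    _ = ∑' k, c k * (a i * b m) ^ k := by
        refine tsum_congr fun k => ?_
        have : ∑ j : Fin N, c k * a i ^ k * coefIf (j:ℕ) k b
            * ∏ l ∈ Finset.range (j:ℕ), (b m - b l)
            = c k * a i ^ k * ∑ j ∈ Finset.range N,
                coefIf j k b * ∏ l ∈ Finset.range j, (b m - b l) := by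
          rw [Finset.mul_sum, ← Fin.sum_univ_eq_sum_range]
          exact Finset.sum_congr rfl fun j _ => by ring
        rw [this, ← newton_range N m k m.isLt b, mul_pow]
        ring

end DetFactor

lemma prod_pairs_Ioi {N : ℕ} (f : Fin N → Fin N → ℝ) :
    ∏ p ∈ Finset.univ.filter (fun p : Fin N × Fin N => p.1 < p.2), f p.1 p.2
      = ∏ i : Fin N, ∏ j ∈ Finset.Ioi i, f i j := by
  rw [Finset.prod_sigma']
  refine Finset.prod_nbij' (fun p => ⟨p.1, p.2⟩) (fun q => (q.1, q.2)) ?_ ?_ ?_ ?_ ?_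
  · rintro ⟨i, j⟩ hp
    simp only [Finset.mem_filter, Finset.mem_univ, true_and] at hp
    simp [Finset.mem_sigma, Finset.mem_Ioi, hp]
  · rintro ⟨i, j⟩ hq
    simp only [Finset.mem_sigma, Finset.mem_univ, Finset.mem_Ioi, true_and] at hq
    simp [hq]
  · rintro ⟨i, j⟩ _; rfl
  · rintro ⟨i, j⟩ _; rfl
  · rintro ⟨i, j⟩ _; rfl

lemma prod_pairs_Iio {N : ℕ} (f : Fin N → Fin N → ℝ) :
    ∏ p ∈ Finset.univ.filter (fun p : Fin N × Fin N => p.1 < p.2), f p.1 p.2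
      = ∏ j : Fin N, ∏ i ∈ Finset.Iio j, f i j := by
  rw [Finset.prod_sigma']
  refine Finset.prod_nbij' (fun p => ⟨p.2, p.1⟩) (fun q => (q.2, q.1)) ?_ ?_ ?_ ?_ ?_
  · rintro ⟨i, j⟩ hp
    simp only [Finset.mem_filter, Finset.mem_univ, true_and] at hp
    simp [Finset.mem_sigma, Finset.mem_Iio, hp]
  · rintro ⟨j, i⟩ hq
    simp only [Finset.mem_sigma, Finset.mem_univ, Finset.mem_Iio, true_and] at hq
    simp [hq]
  · rintro ⟨i, j⟩ _; rfl
  · rintro ⟨j, i⟩ _; rfl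
  · rintro ⟨i, j⟩ _; rfl

lemma prod_range_fin {N : ℕ} (m : Fin N) (g : ℕ → ℝ) :
    ∏ l ∈ Finset.range (m:ℕ), g l = ∏ i ∈ Finset.Iio m, g (i:ℕ) := by
  refine Finset.prod_bij' (fun l hl => (⟨l, lt_trans (Finset.mem_range.1 hl) m.isLt⟩ : Fin N))
    (fun i _ => (i:ℕ)) ?_ ?_ ?_ ?_ ?_
  · intro l hl
    simpa [Finset.mem_Iio, Fin.lt_def] using Finset.mem_range.1 hl
  · intro i hi
    simpa [Finset.mem_range, ← Fin.lt_def] using Finset.mem_Iio.1 hi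
  · intros; rfl
  · intros; simp
  · intros; rfl

/-- determinant of the "Newton basis" matrix is the Vandermonde product. -/
lemma det_newton_basis {N : ℕ} (b : ℕ → ℝ) :
    Matrix.det (Matrix.of fun m j : Fin N => ∏ l ∈ Finset.range (j:ℕ), (b m - b l))
      = vandermondeProd (fun m : Fin N => b m) := by
  rw [Matrix.det_of_lowerTriangular]
  · unfold vandermondeProd
    rw [prod_pairs_Iio (fun i j => b j - b i)]
    refine Finset.prod_congr rfl fun m _ => ?_
    simp only [Matrix.of_apply]
    rw [prod_range_fin m (fun l => b (m:ℕ) - b l)]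
  · intro i j hij
    simp only [OrderDual.toDual_lt_toDual] at hij
    exact Finset.prod_eq_zero (Finset.mem_range.2 hij) (by ring)

/-- coefficients of the rescaled Bessel series -/
noncomputable def cC (α : ℝ) (k : ℕ) : ℝ :=
  (4:ℝ)⁻¹ ^ k / (k.factorial * Real.Gamma (k + α + 1))

lemma gamma_arg_pos {α : ℝ} (hα : -1 < α) (k : ℕ) : (0:ℝ) < (k:ℝ) + α + 1 := by
  have : (0:ℝ) ≤ (k:ℝ) := Nat.cast_nonneg k
  linarith

lemma cC_pos {α : ℝ} (hα : -1 < α) (k : ℕ) : 0 < cC α k := by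
  have h1 : (0:ℝ) < Real.Gamma ((k:ℝ) + α + 1) :=
    Real.Gamma_pos_of_pos (gamma_arg_pos hα k)
  have h2 : (0:ℝ) < k.factorial := by exact_mod_cast k.factorial_pos
  unfold cC
  positivity

lemma cC_summable {α : ℝ} (hα : -1 < α) (M : ℝ) (hM : 0 ≤ M) :
    Summable fun k => |cC α k| * M ^ k := by
  -- compare with M+1 > 0
  have key : ∀ M' : ℝ, 0 < M' → Summable fun k => |cC α k| * M' ^ k := by
    intro M' hM'
    set f : ℕ → ℝ := fun k => |cC α k| * M' ^ k with hf
    have hfpos : ∀ k, 0 < f k := fun k => by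
      have := cC_pos hα k
      have : |cC α k| = cC α k := abs_of_pos this
      simp only [hf, this]
      positivity
    apply summable_of_ratio_test_tendsto_lt_one (l := 0) one_pos
      (Eventually.of_forall fun k => (hfpos k).ne')
    have hration : ∀ k : ℕ, ‖f (k+1)‖ / ‖f k‖ = M' / (4 * (((k:ℝ)+1) * ((k:ℝ)+α+1))) := by
      intro k
      have hΓpos := Real.Gamma_pos_of_pos (gamma_arg_pos hα k)
      have hΓrec : Real.Gamma ((↑(k+1):ℝ) + α + 1)
          = ((k:ℝ) + α + 1) * Real.Gamma ((k:ℝ) + α + 1) := by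
        have h0 : ((↑(k+1):ℝ) + α + 1) = ((k:ℝ) + α + 1) + 1 := by push_cast; ring
        rw [h0, Real.Gamma_add_one (gamma_arg_pos hα k).ne']
      have hfacpos : (0:ℝ) < k.factorial := by exact_mod_cast k.factorial_pos
      have hstep : f (k+1) = f k * (M' / (4 * (((k:ℝ)+1) * ((k:ℝ)+α+1)))) := by
        simp only [hf]
        rw [abs_of_pos (cC_pos hα _), abs_of_pos (cC_pos hα _)]
        unfold cC
        rw [hΓrec]
        have hfs : ((k+1).factorial : ℝ) = ((k:ℝ)+1) * k.factorial := by
          rw [Nat.factorial_succ]; push_cast; ring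
        rw [hfs]
        have h1 : ((k:ℝ)+1) ≠ 0 := by positivity
        have h2 : ((k:ℝ)+α+1) ≠ 0 := (gamma_arg_pos hα k).ne'
        field_simp
        ring
      rw [Real.norm_eq_abs, Real.norm_eq_abs, abs_of_pos (hfpos _), abs_of_pos (hfpos _),
        hstep]
      rw [mul_comm (f k), mul_div_assoc, div_self (hfpos k).ne', mul_one]
    rw [show (fun k : ℕ => ‖f (k+1)‖ / ‖f k‖)
        = fun k : ℕ => M' / (4 * (((k:ℝ)+1) * ((k:ℝ)+α+1))) from funext hration]
    apply Tendsto.div_atTop tendsto_const_nhds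
    apply Tendsto.const_mul_atTop (by norm_num : (0:ℝ) < 4)
    apply Tendsto.atTop_mul_atTop₀
    · exact tendsto_atTop_add_const_right _ _ tendsto_natCast_atTop_atTop
    · apply tendsto_atTop_add_const_right
      exact tendsto_atTop_add_const_right _ _ tendsto_natCast_atTop_atTop
  rcases eq_or_lt_of_le hM with rfl | hM'
  · refine (key 1 one_pos).of_nonneg_of_le (fun k => by positivity) fun k => ?_
    rcases Nat.eq_zero_or_pos k with rfl | hk
    · simp
    · simp [zero_pow hk.ne', abs_nonneg]
  · exact key M hM'

lemma besselI_eq {α : ℝ} (hα : -1 < α) {u : ℝ} (hu : 0 < u) :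
    besselI α u = u ^ α / (2:ℝ) ^ α * ∑' k, cC α k * (u^2) ^ k := by
  unfold besselI
  rw [← tsum_mul_left]
  refine tsum_congr fun k => ?_
  have h2 : (0:ℝ) < u / 2 := by linarith
  have e1 : (2 * (k:ℝ) + α) = ((2*k : ℕ) : ℝ) + α := by push_cast; ring
  rw [e1, Real.rpow_add h2, Real.rpow_natCast]
  have e2 : (u/2) ^ (2*k) = (u^2)^k * ((4:ℝ)⁻¹)^k := by
    rw [pow_mul, ← mul_pow]
    congr 1
    ring
  have e3 : (u/2) ^ α = u ^ α / (2:ℝ) ^ α := Real.div_rpow hu.le (by norm_num) α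
  rw [e2, e3]
  unfold cC
  have hΓ : (0:ℝ) < Real.Gamma ((k:ℝ) + α + 1) := Real.Gamma_pos_of_pos (by
    have : (0:ℝ) ≤ (k:ℝ) := Nat.cast_nonneg k
    linarith)
  have hfac : (0:ℝ) < (k.factorial:ℝ) := by exact_mod_cast k.factorial_pos
  field_simp

end S4

open S4 in
theorem stmt_4 (α : ℝ) (hα : -1 < α) (N : ℕ) (hN : 1 ≤ N)
    (x : Fin N → ℝ) (hxinj : Function.Injective x) (hxpos : ∀ i, 0 < x i) :
    Filter.Tendsto
      (fun y : Fin N → ℝ =>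
        (Matrix.of fun i j : Fin N => besselI α (x i * y j)).det /
          ((∏ k : Fin N, (x k * y k) ^ α) * vandermondeProd (fun k : Fin N => (y k) ^ 2)))
      (nhdsWithin 0 {y : Fin N → ℝ | Function.Injective y ∧ ∀ i, 0 < y i})
      (nhds (vandermondeProd (fun k : Fin N => (x k) ^ 2) *
        (2 : ℝ) ^ (-(α * (N : ℝ)) - (N : ℝ) * ((N : ℝ) - 1)) /
          ∏ j : Fin N, ((Nat.factorial (j : ℕ) : ℝ) * Real.Gamma (α + (j : ℕ) + 1)))) := by
  set S : Set (Fin N → ℝ) := {y | Function.Injective y ∧ ∀ i, 0 < y i} with hS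
  set a : Fin N → ℝ := fun i => x i ^ 2 with ha
  set bfun : (Fin N → ℝ) → (ℕ → ℝ) :=
    fun y l => if h : l < N then (y ⟨l, h⟩)^2 else 0 with hbfun
  have hbfun_apply : ∀ (y : Fin N → ℝ) (m : Fin N), bfun y (m : ℕ) = y m ^ 2 := by
    intro y m
    simp [hbfun, m.isLt]
  have hbfun_cont : Continuous bfun := by
    apply continuous_pi
    intro l
    by_cases h : l < N
    · simp only [hbfun, dif_pos h]
      exact (continuous_apply (⟨l, h⟩ : Fin N)).pow 2
    · simp only [hbfun, dif_neg h]
      exact continuous_const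
  have hbfun_zero : bfun 0 = 0 := by
    funext l
    by_cases h : l < N <;> simp [hbfun, h]
  set Bmat : (ℕ → ℝ) → Matrix (Fin N) (Fin N) ℝ :=
    fun b => Matrix.of fun i j : Fin N => ∑' k, cC α k * a i ^ k * coefIf (j:ℕ) k b with hB
  set B0 : Matrix (Fin N) (Fin N) ℝ :=
    Matrix.of fun i j : Fin N => cC α (j:ℕ) * a i ^ (j:ℕ) with hB0
  -- eventual bound on bfun
  have hev1 : ∀ᶠ y in nhdsWithin (0 : Fin N → ℝ) S, ∀ l : ℕ, |bfun y l| ≤ 1 := by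
    apply Filter.Eventually.filter_mono nhdsWithin_le_nhds
    have hball : Metric.closedBall (0 : Fin N → ℝ) 1 ∈ nhds (0 : Fin N → ℝ) :=
      Metric.closedBall_mem_nhds _ one_pos
    filter_upwards [hball] with y hy
    intro l
    by_cases h : l < N
    · simp only [hbfun, dif_pos h, abs_pow, sq_abs]
      have h1 : ‖y (⟨l, h⟩ : Fin N)‖ ≤ ‖y‖ := norm_le_pi_norm y _
      have h2 : ‖y‖ ≤ 1 := by
        rw [Metric.mem_closedBall, dist_zero_right] at hy
        exact hy
      have h3 : |y (⟨l, h⟩ : Fin N)| ≤ 1 := le_trans h1 h2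
      calc (y (⟨l, h⟩ : Fin N))^2 = |y (⟨l, h⟩ : Fin N)|^2 := (sq_abs _).symm
        _ ≤ 1 := by nlinarith [abs_nonneg (y (⟨l, h⟩ : Fin N))]
    · simp [hbfun, h]
  have hev2 : ∀ᶠ y in nhdsWithin (0 : Fin N → ℝ) S, y ∈ S :=
    eventually_mem_nhdsWithin
  -- Step 1 : eventual equality of the ratio with det Bmat / (2^α)^N
  have step1 : ∀ᶠ y in nhdsWithin (0 : Fin N → ℝ) S,
      (Matrix.of fun i j : Fin N => besselI α (x i * y j)).det /
          ((∏ k : Fin N, (x k * y k) ^ α) * vandermondeProd (fun k : Fin N => (y k) ^ 2))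
        = (Bmat (bfun y)).det / ((2:ℝ)^α)^N := by
    filter_upwards [hev1, hev2] with y hy1 hy2
    obtain ⟨hyinj, hypos⟩ := hy2
    have h2pos : (0:ℝ) < (2:ℝ)^α := Real.rpow_pos_of_pos two_pos α
    -- rewrite the matrix
    have hmat : (Matrix.of fun i j : Fin N => besselI α (x i * y j))
        = Matrix.of fun i j : Fin N => (x i ^ α / (2:ℝ)^α) *
            ((Matrix.of fun i j : Fin N => (y j ^ α) *
              ((Matrix.of fun i m : Fin N =>
                ∑' k, cC α k * (a i * bfun y (m:ℕ)) ^ k) i j)) i j) := by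
      ext i j
      simp only [Matrix.of_apply]
      rw [besselI_eq hα (mul_pos (hxpos i) (hypos j))]
      have e1 : ∀ k : ℕ, ((x i * y j)^2)^k = (a i * bfun y (j:ℕ))^k := by
        intro k
        rw [hbfun_apply y j, ha, mul_pow]
      rw [tsum_congr fun k => by rw [e1 k]]
      rw [Real.mul_rpow (hxpos i).le (hypos j).le]
      ring
    rw [hmat, Matrix.det_mul_column, Matrix.det_mul_row,
      det_factor (cC α) a (bfun y) (cC_summable hα) hy1, det_newton_basis]
    have hvp : vandermondeProd (fun m : Fin N => bfun y (m:ℕ))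
        = vandermondeProd (fun k : Fin N => (y k)^2) := by
      congr 1
      funext m
      exact hbfun_apply y m
    rw [hvp]
    -- numeric manipulation
    have hxyprod : (∏ k : Fin N, (x k * y k) ^ α)
        = (∏ k : Fin N, x k ^ α) * ∏ k : Fin N, y k ^ α := by
      rw [← Finset.prod_mul_distrib]
      exact Finset.prod_congr rfl fun k _ => Real.mul_rpow (hxpos k).le (hypos k).le
    have hxdiv : (∏ i : Fin N, (x i ^ α / (2:ℝ)^α))
        = (∏ i : Fin N, x i ^ α) / ((2:ℝ)^α)^N := by
      rw [Finset.prod_div_distrib, Finset.prod_const, Finset.card_univ, Fintype.card_fin]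
    have hPx : (0:ℝ) < ∏ k : Fin N, x k ^ α :=
      Finset.prod_pos fun k _ => Real.rpow_pos_of_pos (hxpos k) α
    have hPy : (0:ℝ) < ∏ k : Fin N, y k ^ α :=
      Finset.prod_pos fun k _ => Real.rpow_pos_of_pos (hypos k) α
    have hΔ : vandermondeProd (fun k : Fin N => (y k)^2) ≠ 0 := by
      unfold vandermondeProd
      rw [Finset.prod_ne_zero_iff]
      intro p hp
      rw [Finset.mem_filter] at hp
      intro hzero
      have h1 : (y p.2 - y p.1) * (y p.2 + y p.1) = 0 := by linear_combination hzero
      rcases mul_eq_zero.1 h1 with h2 | h2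
      · exact absurd (hyinj (sub_eq_zero.1 h2)) (ne_of_gt hp.2)
      · have := hypos p.1; have := hypos p.2; linarith
    rw [hxyprod, hxdiv]
    field_simp
    ring
  -- Step 2 : tendsto of det Bmat
  have step2 : Filter.Tendsto (fun y => (Bmat (bfun y)).det)
      (nhdsWithin (0 : Fin N → ℝ) S) (nhds B0.det) := by
    have hmat : Filter.Tendsto (fun y => Bmat (bfun y))
        (nhdsWithin (0 : Fin N → ℝ) S) (nhds B0) := by
      refine tendsto_pi_nhds.2 ?_
      intro i
      rw [tendsto_pi_nhds]
      intro j
      -- entrywise convergence via dominated convergence for tsums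
      have hapos : 0 < a i := pow_pos (hxpos i) 2
      have hbound : Summable fun k : ℕ => cC α k * (2 * a i) ^ k := by
        refine (cC_summable hα (2 * a i) (by positivity)).congr fun k => ?_
        rw [abs_of_pos (cC_pos hα k)]
      have hab : ∀ k : ℕ, Filter.Tendsto
          (fun y => cC α k * a i ^ k * coefIf (j:ℕ) k (bfun y))
          (nhdsWithin (0 : Fin N → ℝ) S)
          (nhds (cC α k * a i ^ k * (if k = (j:ℕ) then 1 else 0))) := by
        intro k
        have hc : Continuous fun y => cC α k * a i ^ k * coefIf (j:ℕ) k (bfun y) :=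
          continuous_const.mul ((coefIf_continuous (j:ℕ) k).comp hbfun_cont)
        have := (hc.tendsto 0).mono_left (nhdsWithin_le_nhds (s := S))
        simpa [hbfun_zero, coefIf_zero] using this
      have h_bound : ∀ᶠ y in nhdsWithin (0 : Fin N → ℝ) S,
          ∀ k : ℕ, ‖cC α k * a i ^ k * coefIf (j:ℕ) k (bfun y)‖ ≤ cC α k * (2 * a i) ^ k := by
        filter_upwards [hev1] with y hy1 k
        rw [Real.norm_eq_abs, abs_mul, abs_mul, abs_of_pos (cC_pos hα k),
          abs_of_pos (pow_pos hapos k), mul_pow]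
        calc cC α k * a i ^ k * |coefIf (j:ℕ) k (bfun y)|
            ≤ cC α k * a i ^ k * 2 ^ k := by
              refine mul_le_mul_of_nonneg_left (coefIf_bound _ _ _ hy1) ?_
              have := cC_pos hα k
              positivity
          _ = cC α k * (2 ^ k * a i ^ k) := by ring
      have key := tendsto_tsum_of_dominated_convergence hbound hab h_bound
      have hval : (∑' k, cC α k * a i ^ k * (if k = (j:ℕ) then 1 else 0))
          = cC α (j:ℕ) * a i ^ (j:ℕ) := by
        rw [tsum_congr (fun k => by
          rw [mul_ite, mul_one, mul_zero] :
          ∀ k : ℕ, cC α k * a i ^ k * (if k = (j:ℕ) then 1 else 0)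
            = if k = (j:ℕ) then cC α k * a i ^ k else 0)]
        rw [tsum_eq_single (j:ℕ) (fun k hk => if_neg hk), if_pos rfl]
      rw [hval] at key
      exact key
    have hdet : Continuous fun M : Matrix (Fin N) (Fin N) ℝ => M.det :=
      Continuous.matrix_det continuous_id
    exact ((hdet.tendsto B0).comp hmat)
  -- Step 3 : value of the limit
  have step3 : B0.det / ((2:ℝ)^α)^N
      = vandermondeProd (fun k : Fin N => (x k) ^ 2) *
        (2 : ℝ) ^ (-(α * (N : ℝ)) - (N : ℝ) * ((N : ℝ) - 1)) /
          ∏ j : Fin N, ((Nat.factorial (j : ℕ) : ℝ) * Real.Gamma (α + (j : ℕ) + 1)) := by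
    -- determinant of B0
    have hdetB0 : B0.det = (∏ j : Fin N, cC α (j:ℕ)) * vandermondeProd (fun k : Fin N => x k ^ 2) := by
      have e : B0 = Matrix.of fun i j : Fin N => cC α (j:ℕ) * (Matrix.vandermonde a) i j := by
        ext i j
        simp [hB0, Matrix.vandermonde]
      rw [e, Matrix.det_mul_row, Matrix.det_vandermonde]
      congr 1
      rw [← prod_pairs_Ioi (fun i j => a j - a i)]
      rfl
    -- the Gamma product
    have hΓc : ∀ j : Fin N, Real.Gamma ((j:ℕ) + α + 1) = Real.Gamma (α + (j:ℕ) + 1) := by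
      intro j
      congr 1
      ring
    set D : ℝ := ∏ j : Fin N, ((Nat.factorial (j : ℕ) : ℝ) * Real.Gamma (α + (j : ℕ) + 1)) with hD
    have hDpos : 0 < D := by
      refine Finset.prod_pos fun j _ => mul_pos ?_ ?_
      · exact_mod_cast (j:ℕ).factorial_pos
      · rw [← hΓc j]
        exact Real.Gamma_pos_of_pos (gamma_arg_pos hα (j:ℕ))
    have hcprod : (∏ j : Fin N, cC α (j:ℕ))
        = (∏ j : Fin N, ((4:ℝ)⁻¹)^(j:ℕ)) / D := by
      rw [hD, ← Finset.prod_div_distrib]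
      refine Finset.prod_congr rfl fun j _ => ?_
      unfold cC
      rw [hΓc j]
    -- the power of two computation
    set m : ℕ := ∑ i ∈ Finset.range N, i with hm
    have hm2 : 2 * m = N * (N - 1) := by
      rw [hm, mul_comm]
      exact Finset.sum_range_id_mul_two N
    have hmcast : 2 * (m:ℝ) = (N:ℝ) * ((N:ℝ) - 1) := by
      have h1 : ((2 * m : ℕ) : ℝ) = ((N * (N-1) : ℕ) : ℝ) := by rw [hm2]
      push_cast [Nat.cast_sub hN] at h1
      linarith
    have hsum : (∑ j : Fin N, (j:ℕ)) = m := by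
      rw [hm]
      exact Fin.sum_univ_eq_sum_range (fun i => i) N
    have h4 : (4:ℝ)⁻¹ = (2:ℝ) ^ (-2 : ℝ) := by
      rw [show (-2:ℝ) = ((-2 : ℤ):ℝ) by norm_num, Real.rpow_intCast]
      norm_num
    have hP : (∏ j : Fin N, ((4:ℝ)⁻¹)^(j:ℕ)) = (2:ℝ) ^ (-2 * (m:ℝ)) := by
      rw [Finset.prod_pow_eq_pow_sum, hsum, h4, ← Real.rpow_natCast ((2:ℝ)^(-2:ℝ)) m,
        ← Real.rpow_mul (by norm_num : (0:ℝ) ≤ 2)]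
    have h2N : ((2:ℝ)^α)^N = (2:ℝ) ^ (α * (N:ℝ)) := by
      rw [← Real.rpow_natCast ((2:ℝ)^α) N, ← Real.rpow_mul (by norm_num : (0:ℝ) ≤ 2)]
    have hPE : (∏ j : Fin N, ((4:ℝ)⁻¹)^(j:ℕ)) / ((2:ℝ)^α)^N
        = (2:ℝ) ^ (-(α * (N:ℝ)) - (N:ℝ) * ((N:ℝ) - 1)) := by
      rw [hP, h2N, ← Real.rpow_sub (by norm_num : (0:ℝ) < 2)]
      congr 1
      linarith
    have h2pow : ((2:ℝ)^α)^N ≠ 0 := by positivity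
    rw [hdetB0, hcprod]
    rw [div_eq_iff h2pow] at hPE
    rw [hPE]
    field_simp
  rw [← step3]
  exact Filter.Tendsto.congr' (step1.mono fun y h => h.symm) (step2.div_const _)
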